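/- Fix a strictly increasing finite value sequence v_1 < … < v_K with pmf f(k) > 0 and cdf F(k) = ∑_{j≤k} f(j). Let φ(k) = v_k − (v_{k+1} − v_k)·(1 − F(k))/f(k) for k < K and φ(K) = v_K be the (discrete) virtual values. Then the expected payment equals the expected virtual surplus: ∑_{k=1}^{K} f(k)·p(k) = ∑_{k=1}^{K} f(k)·φ(k)·a(k), where p(k) = v_k·a(k) − ∑_{l=1}^{k-1}(v_{l+1}−v_l)·a(l). -/

import Mathlib

open Finset

lemma myerson_swap (K : ℕ) (h : ℕ → ℕ → ℝ) :
    ∑ k ∈ Icc 1 K, ∑ l ∈ Ico 1 k, h k l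
      = ∑ l ∈ Ico 1 K, ∑ k ∈ Icc (l + 1) K, h k l := by
  apply Finset.sum_comm'
  intro k l
  simp only [mem_Icc, mem_Ico]
  omega

lemma myerson_tail (K : ℕ) (f : ℕ → ℝ) (hf1 : ∑ k ∈ Icc 1 K, f k = 1)
    (F : ℕ → ℝ) (hF : ∀ k, F k = ∑ j ∈ Icc 1 k, f j)
    (l : ℕ) (hl : l ≤ K) :
    ∑ k ∈ Icc (l + 1) K, f k = 1 - F l := by
  have h : ∑ k ∈ Icc 1 l, f k + ∑ k ∈ Icc (l + 1) K, f k = ∑ k ∈ Icc 1 K, f k := by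
    have h1l : Icc 1 l = Ioc 0 l := Finset.Icc_add_one_left_eq_Ioc 0 l
    have h1K : Icc 1 K = Ioc 0 K := Finset.Icc_add_one_left_eq_Ioc 0 K
    rw [Finset.Icc_add_one_left_eq_Ioc l K, h1l, h1K]
    exact Finset.sum_Ioc_consecutive _ (Nat.zero_le l) hl
  rw [hF l]
  linarith [hf1 ▸ h]

/-- discrete Myerson lemma for a single bidder — expected payment
equals expected virtual surplus. -/
theorem expected_payment_eq_expected_virtual_surplus
    (K : ℕ) (hK : 1 ≤ K) (v : ℕ → ℝ)
    (hv : ∀ k, 1 ≤ k → k < K → v k < v (k + 1)) (hv0 : ∀ k, 1 ≤ k → k ≤ K → 0 ≤ v k)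
    (f : ℕ → ℝ) (hf : ∀ k, 1 ≤ k → k ≤ K → 0 < f k) (hf1 : ∑ k ∈ Icc 1 K, f k = 1)
    (F : ℕ → ℝ) (hF : ∀ k, F k = ∑ j ∈ Icc 1 k, f j)
    (φ : ℕ → ℝ)
    (hφ : ∀ k, 1 ≤ k → k < K → φ k = v k - (v (k + 1) - v k) * (1 - F k) / f k)
    (hφK : φ K = v K)
    (a : ℕ → ℝ) (p : ℕ → ℝ)
    (hp : ∀ k, 1 ≤ k → k ≤ K →
      p k = v k * a k - ∑ l ∈ Ico 1 k, (v (l + 1) - v l) * a l) :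
    ∑ k ∈ Icc 1 K, f k * p k = ∑ k ∈ Icc 1 K, f k * φ k * a k := by
  -- Rewrite LHS using the payment formula
  have lhs_eq : ∑ k ∈ Icc 1 K, f k * p k
      = ∑ k ∈ Icc 1 K, f k * (v k * a k)
        - ∑ k ∈ Icc 1 K, ∑ l ∈ Ico 1 k, f k * ((v (l + 1) - v l) * a l) := by
    rw [← Finset.sum_sub_distrib]
    apply Finset.sum_congr rfl
    intro k hk
    simp only [mem_Icc] at hk
    rw [hp k hk.1 hk.2, mul_sub, Finset.mul_sum]
  rw [lhs_eq, myerson_swap]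
  -- evaluate inner sums
  have inner : ∀ l ∈ Ico 1 K,
      ∑ k ∈ Icc (l + 1) K, f k * ((v (l + 1) - v l) * a l)
        = (1 - F l) * ((v (l + 1) - v l) * a l) := by
    intro l hl
    simp only [mem_Ico] at hl
    rw [← Finset.sum_mul, myerson_tail K f hf1 F hF l (le_of_lt hl.2)]
  rw [Finset.sum_congr rfl inner]
  -- Rewrite RHS
  have rhs_eq : ∑ k ∈ Icc 1 K, f k * φ k * a k
      = ∑ k ∈ Icc 1 K, f k * (v k * a k)
        - ∑ l ∈ Ico 1 K, (1 - F l) * ((v (l + 1) - v l) * a l) := by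
    have hsplit : ∀ (g : ℕ → ℝ), ∑ k ∈ Icc 1 K, g k = ∑ k ∈ Ico 1 K, g k + g K := by
      intro g
      rw [← Finset.Ico_add_one_right_eq_Icc, Finset.sum_Ico_succ_top hK]
    rw [hsplit (fun k => f k * φ k * a k), hsplit (fun k => f k * (v k * a k)), hφK]
    have : ∑ k ∈ Ico 1 K, f k * φ k * a k
        = ∑ k ∈ Ico 1 K, (f k * (v k * a k) - (1 - F k) * ((v (k + 1) - v k) * a k)) := by
      apply Finset.sum_congr rfl
      intro k hk
      simp only [mem_Ico] at hk
      rw [hφ k hk.1 hk.2]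
      have hfk : f k ≠ 0 := ne_of_gt (hf k hk.1 (le_of_lt hk.2))
      field_simp
    rw [this, Finset.sum_sub_distrib]
    ring
  rw [rhs_eq]
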